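/- arXiv:1507.05212 — 5 statements merged into one kernel-verified Lean document; each statement's English description precedes it below -/
import Mathlib

section
/- A finite module M over a ring R with identity is not cyclic if and only if there exist proper nonzero submodules E_1, ..., E_r of M whose union equals M. -/
/-- A finite module `M` over a ring `R` with identity is not cyclic if and only if
there exist proper nonzero submodules `E_1, …, E_r` of `M` whose union is `M`. -/
theorem not_cyclic_iff_union_of_proper_submodules
    (R : Type*) (M : Type*) [Ring R] [AddCommGroup M] [Module R M] [Finite M] :
    ¬(∃ x : M, Submodule.span R {x} = ⊤) ↔
      ∃ (r : ℕ) (E : Fin r → Submodule R M),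
        (∀ i, E i ≠ ⊥) ∧ (∀ i, E i ≠ ⊤) ∧ (⋃ i, (E i : Set M)) = Set.univ := by
  classical
  constructor
  · intro h
    -- M is nontrivial: otherwise span {0} = ⊤
    have hM : ∃ x₀ : M, x₀ ≠ 0 := by
      by_contra hc
      push_neg at hc
      exact h ⟨0, by
        ext y; simp [Submodule.mem_span_singleton, hc y]⟩
    obtain ⟨x₀, hx₀⟩ := hM
    have e := (Finite.equivFin M).symm
    refine ⟨Nat.card M, fun i => if e i = 0 then Submodule.span R {x₀}
      else Submodule.span R {e i}, ?_, ?_, ?_⟩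
    · intro i
      by_cases hi : e i = 0 <;> simp [hi, Submodule.span_singleton_eq_bot, hx₀]
    · intro i
      by_cases hi : e i = 0 <;> simp only [hi, if_true, if_false, if_neg] <;>
        [exact fun ht => h ⟨x₀, ht⟩; skip] <;> simp [hi] <;>
        exact fun ht => h ⟨e i, ht⟩
    · ext y
      simp only [Set.mem_iUnion, Set.mem_univ, iff_true]
      by_cases hy : y = 0
      · refine ⟨e.symm x₀, ?_⟩
        subst hy
        by_cases h0 : e (e.symm x₀) = 0 <;> simp [h0, Submodule.zero_mem]
      · refine ⟨e.symm y, ?_⟩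
        rw [e.apply_symm_apply, if_neg hy]
        exact Submodule.mem_span_singleton_self y
  · rintro ⟨r, E, hbot, htop, hcov⟩ ⟨x, hx⟩
    have : x ∈ ⋃ i, (E i : Set M) := hcov ▸ Set.mem_univ x
    obtain ⟨_, ⟨i, rfl⟩, hxi⟩ := this
    exact htop i (top_le_iff.mp (hx ▸ Submodule.span_le.mpr (Set.singleton_subset_iff.mpr hxi)))
end

section
/- The Cauchy binomial theorem: for any commutative ring element x and nonnegative integer t, the product over i from 0 to t-1 of (1 + x q^i) equals the sum over i from 0 to t of q^{binom(i,2)} binom(t,i)_q x^i. -/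
/-- The Gaussian (q-)binomial coefficient, as an element of a commutative ring,
defined via the q-Pascal recursion
`[n+1, k+1]_q = [n, k]_q + q^(k+1) * [n, k+1]_q`. -/
def qBinom {K : Type*} [CommRing K] (q : K) : ℕ → ℕ → K
  | _, 0 => 1
  | 0, _ + 1 => 0
  | n + 1, k + 1 => qBinom q n k + q ^ (k + 1) * qBinom q n (k + 1)

theorem qBinom_eq_zero' {K : Type*} [CommRing K] (q : K) :
    ∀ n k, n < k → qBinom q n k = 0
  | 0, _ + 1, _ => rfl
  | n + 1, k + 1, h => by
    rw [qBinom, qBinom_eq_zero' q n k (by omega), qBinom_eq_zero' q n (k + 1) (by omega)]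
    ring

theorem qBinom_alt' {K : Type*} [CommRing K] (q : K) :
    ∀ n k, qBinom q (n + 1) (k + 1) = q ^ (n - k) * qBinom q n k + qBinom q n (k + 1)
  | 0, 0 => by simp [qBinom]
  | 0, k + 1 => by simp [qBinom]
  | n + 1, 0 => by
    conv_rhs => rw [show qBinom q (n + 1) (0 + 1)
      = qBinom q n 0 + q ^ (0 + 1) * qBinom q n (0 + 1) from rfl]
    conv_lhs => rw [show qBinom q (n + 1 + 1) (0 + 1)
      = qBinom q (n + 1) 0 + q ^ (0 + 1) * qBinom q (n + 1) (0 + 1) from rfl,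
      qBinom_alt' q n 0]
    simp only [qBinom, Nat.sub_zero, mul_one]
    ring
  | n + 1, k + 1 => by
    conv_rhs => rw [show qBinom q (n + 1) (k + 1)
        = qBinom q n k + q ^ (k + 1) * qBinom q n (k + 1) from rfl,
      show qBinom q (n + 1) (k + 1 + 1)
        = qBinom q n (k + 1) + q ^ (k + 2) * qBinom q n (k + 2) from rfl]
    conv_lhs => rw [show qBinom q (n + 1 + 1) (k + 1 + 1)
          = qBinom q (n + 1) (k + 1) + q ^ (k + 2) * qBinom q (n + 1) (k + 2) from rfl,
        qBinom_alt' q n k, qBinom_alt' q n (k + 1)]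
    rw [Nat.succ_sub_succ]
    rcases le_or_gt (k + 1) n with h | h
    · have h2 : n - k = (n - (k + 1)) + 1 := by omega
      rw [h2, pow_succ]
      ring
    · rw [qBinom_eq_zero' q n (k + 1) (by omega)]
      ring

/-- The Cauchy binomial theorem:
`∏_{i=0}^{t-1} (1 + x q^i) = ∑_{i=0}^{t} q^(binom(i,2)) [t, i]_q x^i`. -/
theorem cauchy_binomial {K : Type*} [CommRing K] (q x : K) (t : ℕ) :
    ∏ i ∈ Finset.range t, (1 + x * q ^ i) =
      ∑ i ∈ Finset.range (t + 1), q ^ (i.choose 2) * qBinom q t i * x ^ i := by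
  induction t with
  | zero => simp [qBinom]
  | succ t ih =>
    rw [Finset.prod_range_succ, ih]
    have key : ∀ i ∈ Finset.range (t + 1),
        q ^ ((i + 1).choose 2) * qBinom q (t + 1) (i + 1) * x ^ (i + 1)
          = q ^ ((i + 1).choose 2) * qBinom q t (i + 1) * x ^ (i + 1)
            + (q ^ (i.choose 2) * qBinom q t i * x ^ i) * (x * q ^ t) := by
      intro i hi
      have hit : i ≤ t := by simpa using Nat.lt_succ_iff.mp (Finset.mem_range.mp hi)
      have hc : (i + 1).choose 2 = i.choose 2 + i := by
        rw [Nat.choose_succ_succ, Nat.choose_one_right, Nat.add_comm]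
      have he : (i + 1).choose 2 + (t - i) = i.choose 2 + t := by omega
      calc q ^ ((i + 1).choose 2) * qBinom q (t + 1) (i + 1) * x ^ (i + 1)
          = q ^ ((i + 1).choose 2 + (t - i)) * qBinom q t i * x ^ (i + 1)
              + q ^ ((i + 1).choose 2) * qBinom q t (i + 1) * x ^ (i + 1) := by
            rw [qBinom_alt', pow_add]; ring
        _ = _ := by rw [he, pow_add, pow_succ]; ring
    rw [Finset.sum_range_succ' (fun i => q ^ (i.choose 2) * qBinom q (t + 1) i * x ^ i) (t + 1),
        Finset.sum_congr rfl key, Finset.sum_add_distrib,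
        Finset.sum_range_succ (fun i => q ^ ((i + 1).choose 2) * qBinom q t (i + 1) * x ^ (i + 1)) t,
        qBinom_eq_zero' q t (t + 1) (by omega), ← Finset.sum_mul,
        Finset.sum_range_succ' (fun i => q ^ (i.choose 2) * qBinom q t i * x ^ i) t]
    simp only [qBinom, Nat.choose_zero_right, pow_zero, mul_one, one_mul]
    ring
end

section
/- If V_1,...,V_s and U_1,...,U_t are cyclic submodules of a finite module W such that there exist nonzero complex coefficients a_i, b_j with the identity a_1·1_{V_1} + ... + a_s·1_{V_s} = b_1·1_{U_1} + ... + b_t·1_{U_t} of functions on W, where all V_i are pairwise distinct, all U_j are pairwise distinct, and no V_i equals any U_j, then s = t = 0; i.e., any such solution with only cyclic modules is trivial. -/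
/-- Indicator functions of an injective family of cyclic submodules are linearly
independent: if a linear combination with nonzero coefficients vanishes, the
index type is empty. -/
theorem cyclic_indicator_indep {R W : Type*} [Ring R] [AddCommGroup W] [Module R W]
    {ι : Type*} [Fintype ι] (M : ι → Submodule R W) (c : ι → ℂ)
    (hc : ∀ k, c k ≠ 0)
    (hcyc : ∀ k, ∃ x : W, Submodule.span R {x} = M k)
    (hinj : Function.Injective M)
    (h0 : ∀ w : W, ∑ k, c k * (M k : Set W).indicator (fun _ => (1 : ℂ)) w = 0) :
    IsEmpty ι := by
  classical
  by_contra h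
  rw [not_isEmpty_iff] at h
  obtain ⟨k0⟩ := h
  obtain ⟨N, hN, hmax⟩ : ∃ N ∈ Finset.univ.image M, ∀ x ∈ Finset.univ.image M, ¬ N < x := by
    obtain ⟨N, hN⟩ := Finset.exists_maximal (s := Finset.univ.image M) ⟨M k0, by simp⟩
    exact ⟨N, hN.1, fun x hx hlt => hlt.not_ge (hN.2 hx hlt.le)⟩
  obtain ⟨k, -, rfl⟩ := Finset.mem_image.mp hN
  obtain ⟨x, hx⟩ := hcyc k
  have hx_mem : x ∈ M k := hx ▸ Submodule.mem_span_singleton_self x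
  have key : ∀ j, x ∈ M j → j = k := by
    intro j hj
    by_contra hne
    have hle : M k ≤ M j := hx ▸ (Submodule.span_singleton_le_iff_mem x (M j)).mpr hj
    have hlt : M k < M j := lt_of_le_of_ne hle (fun h => hne (hinj h.symm))
    exact hmax (M j) (by simp) hlt
  have h1 := h0 x
  rw [Finset.sum_eq_single k] at h1
  · rw [Set.indicator_of_mem hx_mem] at h1
    simp at h1
    exact hc k h1
  · intro j _ hj
    rw [Set.indicator_of_notMem (fun h => hj (key j h))]
    ring
  · simp

/-- A solution of the isometry equation involving only cyclic submodules of a finite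
module is trivial: if `∑ a_i 1_{V_i} = ∑ b_j 1_{U_j}` with nonzero complex coefficients,
all `V_i` pairwise distinct, all `U_j` pairwise distinct, no `V_i` equal to any `U_j`,
and all modules cyclic, then both sides are empty. -/
theorem cyclic_solution_trivial
    {R W : Type*} [Ring R] [AddCommGroup W] [Module R W] [Finite W]
    {s t : ℕ} (V : Fin s → Submodule R W) (U : Fin t → Submodule R W)
    (a : Fin s → ℂ) (b : Fin t → ℂ)
    (ha : ∀ i, a i ≠ 0) (hb : ∀ j, b j ≠ 0)
    (hVcyc : ∀ i, ∃ x : W, Submodule.span R {x} = V i)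
    (hUcyc : ∀ j, ∃ x : W, Submodule.span R {x} = U j)
    (hVinj : Function.Injective V) (hUinj : Function.Injective U)
    (hVU : ∀ i j, V i ≠ U j)
    (heq : ∀ w : W,
      ∑ i, a i * (V i : Set W).indicator (fun _ => (1 : ℂ)) w =
      ∑ j, b j * (U j : Set W).indicator (fun _ => (1 : ℂ)) w) :
    s = 0 ∧ t = 0 := by
  have hE : IsEmpty (Fin s ⊕ Fin t) := by
    apply cyclic_indicator_indep (Sum.elim V U) (Sum.elim a (fun j => -b j))
    · rintro (i | j)
      · simpa using ha i
      · simpa using hb j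
    · rintro (i | j)
      · exact hVcyc i
      · exact hUcyc j
    · rintro (i | j) (i' | j') h <;> simp only [Sum.elim_inl, Sum.elim_inr] at h
      · rw [hVinj h]
      · exact absurd h (hVU i j')
      · exact absurd h.symm (hVU i' j)
      · rw [hUinj h]
    · intro w
      rw [Fintype.sum_sum_type]
      simp only [Sum.elim_inl, Sum.elim_inr, neg_mul]
      rw [Finset.sum_neg_distrib]
      rw [heq w]
      ring
  constructor
  · by_contra hs
    exact hE.elim (Sum.inl ⟨0, Nat.pos_of_ne_zero hs⟩)
  · by_contra ht
    exact hE.elim (Sum.inr ⟨0, Nat.pos_of_ne_zero ht⟩)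
end

section
/- Let R be a ring with identity, A a finite left R-module, and C an (n,k)_A MDS code with k = 1. Then every Hamming-weight-preserving R-module homomorphism f : C → A^n extends to a monomial map of A^n. -/
/-- Extension theorem for `(n,1)_A` MDS codes: if `C ⊆ A^n` is an `R`-submodule with
`|C| = |A|` and minimum Hamming distance `n`, then every Hamming-weight-preserving
`R`-linear map `f : C → A^n` extends to a monomial map of `A^n`. -/
theorem mds_dim_one_extension
    {R A : Type*} [Ring R] [AddCommGroup A] [Module R A] [Finite A] [DecidableEq A]
    {n : ℕ} (C : Submodule R (Fin n → A))
    (hcard : Nat.card C = Nat.card A)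
    (hdist : ∀ c : C, c ≠ 0 → hammingNorm (c : Fin n → A) = n)
    (f : C →ₗ[R] (Fin n → A))
    (hf : ∀ c : C, hammingNorm (f c) = hammingNorm (c : Fin n → A)) :
    ∃ (π : Equiv.Perm (Fin n)) (g : Fin n → (A ≃ₗ[R] A)),
      ∀ c : C, f c = fun i => g i ((c : Fin n → A) (π i)) := by
  classical
  have full : ∀ (v : Fin n → A), hammingNorm v = n → ∀ i, v i ≠ 0 := by
    intro v hv i h0
    have huniv : ({j | v j ≠ 0} : Finset (Fin n)) = Finset.univ := by
      apply Finset.eq_univ_of_card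
      simpa [hammingNorm] using hv
    have hi : i ∈ ({j | v j ≠ 0} : Finset (Fin n)) := by
      rw [huniv]; exact Finset.mem_univ i
    exact (Finset.mem_filter.mp hi).2 h0
  have hebij : ∀ i : Fin n, Function.Bijective
      (fun c : C => ((LinearMap.proj i : (Fin n → A) →ₗ[R] A).comp C.subtype) c) := by
    intro i
    rw [Nat.bijective_iff_injective_and_card]
    refine ⟨?_, hcard⟩
    intro c c' h
    by_contra hne
    have hcc : c - c' ≠ 0 := sub_ne_zero.mpr hne
    have := full _ (hdist _ hcc) i
    simp only [LinearMap.coe_comp, Function.comp_apply, Submodule.coe_subtype,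
      LinearMap.proj_apply] at h
    exact this (by simpa [sub_eq_zero] using congrArg (· ) (show ((c - c' : C) : Fin n → A) i = 0 by simp [h]))
  have hqbij : ∀ i : Fin n, Function.Bijective
      (fun c : C => ((LinearMap.proj i : (Fin n → A) →ₗ[R] A).comp f) c) := by
    intro i
    rw [Nat.bijective_iff_injective_and_card]
    refine ⟨?_, hcard⟩
    have : Function.Injective ((LinearMap.proj i : (Fin n → A) →ₗ[R] A).comp f) := by
      rw [← LinearMap.ker_eq_bot]
      rw [LinearMap.ker_eq_bot']
      intro c hc
      by_contra hne
      have hn : hammingNorm (f c) = n := (hf c).trans (hdist c hne)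
      have := full _ hn i
      simp only [LinearMap.coe_comp, Function.comp_apply, LinearMap.proj_apply] at hc
      exact this hc
    exact this
  let e : Fin n → (C ≃ₗ[R] A) := fun i =>
    LinearEquiv.ofBijective _ (hebij i)
  let q : Fin n → (C ≃ₗ[R] A) := fun i =>
    LinearEquiv.ofBijective _ (hqbij i)
  refine ⟨Equiv.refl _, fun i => (e i).symm.trans (q i), fun c => ?_⟩
  funext i
  have h1 : (e i).symm ((c : Fin n → A) i) = c := by
    apply (e i).injective
    simp [e, LinearEquiv.ofBijective]
  simp only [Equiv.refl_apply, LinearEquiv.trans_apply, h1]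
  simp [q, LinearEquiv.ofBijective]
end

section
/- Let R = M_m(F_q) and let A = M_{m×k}(F_q) with k ≤ m, considered as a left R-module. Then A has the extension property: for every n and every R-submodule C ⊆ A^n, each Hamming isometry f ∈ Hom_R(C, A^n) extends to a monomial map. -/
section

variable {F : Type*} [Field F] {m k : ℕ}

/-- Left action of the matrix ring `M_m(F)` on `m × k` matrices by matrix multiplication. -/
instance matrixSMul : SMul (Matrix (Fin m) (Fin m) F) (Matrix (Fin m) (Fin k) F) :=
  ⟨fun r a => r * a⟩

instance matrixMulAction :
    MulAction (Matrix (Fin m) (Fin m) F) (Matrix (Fin m) (Fin k) F) where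
  one_smul := Matrix.one_mul
  mul_smul := Matrix.mul_assoc

instance matrixDistribMulAction :
    DistribMulAction (Matrix (Fin m) (Fin m) F) (Matrix (Fin m) (Fin k) F) where
  smul_zero := Matrix.mul_zero
  smul_add := Matrix.mul_add

/-- The left `M_m(F)`-module structure on `A = M_{m×k}(F)`. -/
instance matrixModule :
    Module (Matrix (Fin m) (Fin m) F) (Matrix (Fin m) (Fin k) F) where
  add_smul := Matrix.add_mul
  zero_smul := Matrix.zero_mul

namespace MatExt

lemma smul_def (r : Matrix (Fin m) (Fin m) F) (a : Matrix (Fin m) (Fin k) F) :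
    r • a = r * a := rfl

lemma trace_faithful {u v : ℕ} (a : Matrix (Fin u) (Fin v) F)
    (h : ∀ Z : Matrix (Fin v) (Fin u) F, (Z * a).trace = 0) : a = 0 := by
  ext i j
  have := h (Matrix.of fun t s => if t = j ∧ s = i then (1 : F) else 0)
  simpa [Matrix.trace, Matrix.diag, Matrix.mul_apply, ite_and, Finset.sum_ite_eq,
    Finset.sum_ite_eq'] using this

lemma vecMul_linear [DecidableEq F] (T : (Fin k → F) →ₗ[F] (Fin k → F)) (w : Fin k → F) :
    Matrix.vecMul w (Matrix.of fun t j => T (fun s => if t = s then (1:F) else 0) j) = T w := by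
  funext j
  have hw := pi_eq_sum_univ w
  calc Matrix.vecMul w (Matrix.of fun t j => T (fun s => if t = s then (1:F) else 0) j) j
      = ∑ t, w t * T (fun s => if t = s then (1:F) else 0) j := by
        simp [Matrix.vecMul, dotProduct]
    _ = (∑ t, w t • T (fun s => if t = s then (1:F) else 0)) j := by
        simp [Finset.sum_apply, smul_eq_mul]
    _ = T w j := by
        have : T w = ∑ t, w t • T (fun s => if t = s then (1:F) else 0) := by
          conv_lhs => rw [hw]
          rw [map_sum]
          simp only [map_smul]
        rw [this]

lemma mul_row_apply {u : ℕ} (X : Matrix (Fin u) (Fin k) F) (M : Matrix (Fin k) (Fin k) F)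
    (r : Fin u) (j : Fin k) : (X * M) r j = Matrix.vecMul (X r) M j := by
  simp [Matrix.mul_apply, Matrix.vecMul, dotProduct]

set_option synthInstance.maxHeartbeats 1000000 in
lemma extend_linear (W : Submodule F (Fin k → F)) (θ : W →ₗ[F] (Fin k → F))
    (hθ : Function.Injective θ) :
    ∃ T : (Fin k → F) ≃ₗ[F] (Fin k → F), ∀ (w : Fin k → F) (hw : w ∈ W), T w = θ ⟨w, hw⟩ := by
  obtain ⟨W', hW'⟩ := Submodule.exists_isCompl W
  obtain ⟨U', hU'⟩ := Submodule.exists_isCompl (LinearMap.range θ)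
  have e1 : W ≃ₗ[F] LinearMap.range θ := LinearEquiv.ofInjective θ hθ
  have hr : Module.finrank F W' = Module.finrank F U' := by
    have h1 := Submodule.finrank_add_eq_of_isCompl hW'
    have h2 := Submodule.finrank_add_eq_of_isCompl hU'
    have h3 : Module.finrank F (LinearMap.range θ) = Module.finrank F W :=
      LinearMap.finrank_range_of_inj hθ
    omega
  refine ⟨((Submodule.prodEquivOfIsCompl W W' hW').symm.trans
      ((LinearEquiv.ofInjective θ hθ).prodCongr (LinearEquiv.ofFinrankEq _ _ hr))).trans
      (Submodule.prodEquivOfIsCompl _ U' hU'), fun w hw => ?_⟩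
  have h0 : (Submodule.prodEquivOfIsCompl W W' hW').symm w = (⟨w, hw⟩, 0) :=
    Submodule.prodEquivOfIsCompl_symm_apply_left (p := W) (q := W') hW' ⟨w, hw⟩
  rw [LinearEquiv.trans_apply, LinearEquiv.trans_apply, h0, LinearEquiv.prodCongr_apply,
    map_zero, Submodule.coe_prodEquivOfIsCompl']
  simp [LinearEquiv.ofInjective_apply]


variable [Fintype F] [DecidableEq F]

lemma sum_char (ψ : AddChar F ℂ) (hψ : ∃ x, ψ x ≠ 1) (a : Matrix (Fin m) (Fin k) F) :
    ∑ Y : Matrix (Fin k) (Fin m) F, ψ ((Y * a).trace)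
      = if a = 0 then (Fintype.card (Matrix (Fin k) (Fin m) F) : ℂ) else 0 := by
  classical
  by_cases ha : a = 0
  · simp [ha]
  · rw [if_neg ha]
    obtain ⟨x₀, hx₀⟩ := hψ
    obtain ⟨Z, hZ⟩ : ∃ Z : Matrix (Fin k) (Fin m) F, (Z * a).trace ≠ 0 := by
      by_contra hcon
      push_neg at hcon
      exact ha (trace_faithful a hcon)
    set φ : Matrix (Fin k) (Fin m) F →+ F :=
      { toFun := fun Y => (Y * a).trace
        map_zero' := by simp
        map_add' := fun Y Y' => by
          show ((Y + Y') * a).trace = (Y * a).trace + (Y' * a).trace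
          rw [Matrix.add_mul, Matrix.trace_add] } with hφ
    have hsurj : ∃ Y, ψ (φ Y) ≠ 1 := by
      refine ⟨(x₀ * ((Z * a).trace)⁻¹) • Z, ?_⟩
      have : φ ((x₀ * ((Z * a).trace)⁻¹) • Z) = x₀ := by
        simp only [hφ, AddMonoidHom.coe_mk, ZeroHom.coe_mk, Matrix.smul_mul, Matrix.trace_smul,
          smul_eq_mul]
        field_simp
      rw [this]; exact hx₀
    have : ∑ Y, (ψ.compAddMonoidHom φ) Y = 0 := by
      rw [AddChar.sum_eq_zero_iff_ne_zero]
      rw [AddChar.ne_zero_iff]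
      simpa using hsurj
    exact this

lemma char_match {C : Type*} [AddCommGroup C] [Finite C] {I J : Type*} [Fintype I] [Fintype J]
    (u : I → AddChar C ℂ) (v : J → AddChar C ℂ)
    (h : ∀ c, ∑ i, u i c = ∑ j, v j c) (j₀ : J) : ∃ i, u i = v j₀ := by
  classical
  have li := AddChar.linearIndependent C ℂ
  set S : Finset (AddChar C ℂ) :=
    (Finset.univ.image u) ∪ (Finset.univ.image v) with hS
  set cu : AddChar C ℂ → ℕ := fun χ => (Finset.univ.filter fun p => u p = χ).card with hcu
  set cv : AddChar C ℂ → ℕ := fun χ => (Finset.univ.filter fun p => v p = χ).card with hcv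
  have hu : ∀ p, u p ∈ S := fun p =>
    Finset.mem_union_left _ (Finset.mem_image_of_mem _ (Finset.mem_univ p))
  have hv : ∀ p, v p ∈ S := fun p =>
    Finset.mem_union_right _ (Finset.mem_image_of_mem _ (Finset.mem_univ p))
  have eu : (∑ p, ⇑(u p)) = ∑ χ ∈ S, (cu χ : ℂ) • ⇑χ := by
    rw [← Finset.sum_fiberwise_of_maps_to (fun p _ => hu p) (fun p => ⇑(u p))]
    refine Finset.sum_congr rfl fun χ _ => ?_
    rw [Finset.sum_congr rfl (fun p hp => congrArg _ (Finset.mem_filter.mp hp).2),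
      Finset.sum_const, ← Nat.cast_smul_eq_nsmul ℂ]
  have ev : (∑ p, ⇑(v p)) = ∑ χ ∈ S, (cv χ : ℂ) • ⇑χ := by
    rw [← Finset.sum_fiberwise_of_maps_to (fun p _ => hv p) (fun p => ⇑(v p))]
    refine Finset.sum_congr rfl fun χ _ => ?_
    rw [Finset.sum_congr rfl (fun p hp => congrArg _ (Finset.mem_filter.mp hp).2),
      Finset.sum_const, ← Nat.cast_smul_eq_nsmul ℂ]
  have hfun : (∑ i, ⇑(u i)) = ∑ j, ⇑(v j) := by
    funext c
    simpa using h c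
  have hsum : ∑ χ ∈ S, (((cu χ : ℂ) - (cv χ : ℂ)) • ⇑χ) = 0 := by
    simp only [sub_smul, Finset.sum_sub_distrib]
    rw [← eu, ← ev, hfun, sub_self]
  have hcoeff := linearIndependent_iff'.mp li S (fun χ => (cu χ : ℂ) - (cv χ : ℂ)) hsum
    (v j₀) (hv j₀)
  have hcard : cu (v j₀) = cv (v j₀) := by exact_mod_cast sub_eq_zero.mp hcoeff
  have hpos : 0 < cv (v j₀) := Finset.card_pos.mpr ⟨j₀, by simp⟩
  rw [← hcard] at hpos
  obtain ⟨i, hi⟩ := Finset.card_pos.mp hpos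
  exact ⟨i, (Finset.mem_filter.mp hi).2⟩



set_option maxHeartbeats 1000000 in
lemma half (hk : k ≤ m) (hk0 : 0 < k)
    {C : Type*} [AddCommGroup C] [Module (Matrix (Fin m) (Fin m) F) C] [Fintype C] {N : ℕ}
    (lam mu : Fin N → (C →ₗ[Matrix (Fin m) (Fin m) F] Matrix (Fin m) (Fin k) F))
    (hw : ∀ c, ∑ i, (if lam i c = 0 then 0 else 1 : ℕ)
      = ∑ i, (if mu i c = 0 then 0 else 1 : ℕ))
    (j₀ : Fin N)
    (hmin : ∀ i, ¬ (LinearMap.ker (lam i) < LinearMap.ker (mu j₀))) :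
    ∃ (i₀ : Fin N) (g : Matrix (Fin m) (Fin k) F ≃ₗ[Matrix (Fin m) (Fin m) F] Matrix (Fin m) (Fin k) F),
      ∀ c, mu j₀ c = g (lam i₀ c) := by
  classical
  have hm : 0 < m := lt_of_lt_of_le hk0 hk
  -- a nontrivial character of F
  obtain ⟨ψ, hψ⟩ : ∃ ψ : AddChar F ℂ, ψ 1 ≠ 1 :=
    AddChar.exists_apply_ne_zero.mpr (one_ne_zero)
  have hψ' : ∃ x, ψ x ≠ 1 := ⟨1, hψ⟩
  -- characters attached to coordinate functionals
  set charOf : (C →ₗ[Matrix (Fin m) (Fin m) F] Matrix (Fin m) (Fin k) F) →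
      Matrix (Fin k) (Fin m) F → AddChar C ℂ := fun ν Y =>
    ψ.compAddMonoidHom
      { toFun := fun c => (Y * ν c).trace
        map_zero' := by simp
        map_add' := fun c c' => by
          show (Y * ν (c + c')).trace = (Y * ν c).trace + (Y * ν c').trace
          rw [map_add, Matrix.mul_add, Matrix.trace_add] } with hcharOf
  -- the character identity
  have hchar : ∀ c : C,
      ∑ p : Fin N × Matrix (Fin k) (Fin m) F, charOf (lam p.1) p.2 c
        = ∑ p : Fin N × Matrix (Fin k) (Fin m) F, charOf (mu p.1) p.2 c := by
    intro c
    have hzero : (∑ i, if lam i c = 0 then 1 else 0 : ℕ)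
        = ∑ i, (if mu i c = 0 then 1 else 0 : ℕ) := by
      have e1 : ((∑ i, if lam i c = 0 then 1 else 0) + ∑ i, (if lam i c = 0 then 0 else 1) : ℕ)
          = N := by
        rw [← Finset.sum_add_distrib]
        rw [Finset.sum_congr rfl (fun i _ => by split_ifs <;> rfl : ∀ i ∈ Finset.univ,
          ((if lam i c = 0 then 1 else 0) + if lam i c = 0 then 0 else 1 : ℕ) = 1)]
        simp
      have e2 : ((∑ i, if mu i c = 0 then 1 else 0) + ∑ i, (if mu i c = 0 then 0 else 1) : ℕ)
          = N := by
        rw [← Finset.sum_add_distrib]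
        rw [Finset.sum_congr rfl (fun i _ => by split_ifs <;> rfl : ∀ i ∈ Finset.univ,
          ((if mu i c = 0 then 1 else 0) + if mu i c = 0 then 0 else 1 : ℕ) = 1)]
        simp
      have e3 := hw c
      omega
    calc ∑ p : Fin N × Matrix (Fin k) (Fin m) F, charOf (lam p.1) p.2 c
        = ∑ i, ∑ Y : Matrix (Fin k) (Fin m) F, ψ ((Y * lam i c).trace) := by
          rw [Fintype.sum_prod_type]; rfl
      _ = ∑ i, (if lam i c = 0 then (Fintype.card (Matrix (Fin k) (Fin m) F) : ℂ) else 0) :=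
          Finset.sum_congr rfl fun i _ => sum_char ψ hψ' (lam i c)
      _ = (Fintype.card (Matrix (Fin k) (Fin m) F) : ℂ)
            * ((∑ i, if lam i c = 0 then 1 else 0 : ℕ) : ℂ) := by
          push_cast
          rw [Finset.mul_sum]
          exact Finset.sum_congr rfl fun i _ => by split_ifs <;> simp
      _ = (Fintype.card (Matrix (Fin k) (Fin m) F) : ℂ)
            * ((∑ i, if mu i c = 0 then 1 else 0 : ℕ) : ℂ) := by rw [hzero]
      _ = ∑ i, (if mu i c = 0 then (Fintype.card (Matrix (Fin k) (Fin m) F) : ℂ) else 0) := by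
          push_cast
          rw [Finset.mul_sum]
          exact (Finset.sum_congr rfl fun i _ => by split_ifs <;> simp).symm
      _ = ∑ p : Fin N × Matrix (Fin k) (Fin m) F, charOf (mu p.1) p.2 c := by
          rw [Fintype.sum_prod_type]
          exact (Finset.sum_congr rfl fun i _ => (sum_char ψ hψ' (mu i c))).symm
  -- the distinguished full-rank matrix Y₀
  set Y₀ : Matrix (Fin k) (Fin m) F :=
    Matrix.of (fun i j => if (j : ℕ) = (i : ℕ) then 1 else 0) with hY₀
  have hY₀surj : ∀ Z : Matrix (Fin k) (Fin m) F, ∃ s : Matrix (Fin m) (Fin m) F, Y₀ * s = Z := by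
    intro Z
    refine ⟨Matrix.of (fun a b => if h : (a : ℕ) < k then Z ⟨a, h⟩ b else 0), ?_⟩
    ext i j
    rw [Matrix.mul_apply]
    rw [Finset.sum_eq_single (Fin.castLE hk i)]
    · simp [hY₀, Fin.castLE]
    · intro t _ ht
      have : ¬ ((t : ℕ) = (i : ℕ)) := fun hc => ht (by ext; simp [hc])
      simp [hY₀, this]
    · simp
  -- match the character of (j₀, Y₀)
  obtain ⟨⟨i₀, Y⟩, hmatch⟩ := char_match
    (fun p : Fin N × Matrix (Fin k) (Fin m) F => charOf (lam p.1) p.2)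
    (fun p : Fin N × Matrix (Fin k) (Fin m) F => charOf (mu p.1) p.2)
    hchar (j₀, Y₀)
  -- from equality of characters to equality of traces
  have ht : ∀ c, (Y * lam i₀ c).trace = (Y₀ * mu j₀ c).trace := by
    intro c
    set δ : C → F := fun c => (Y * lam i₀ c).trace - (Y₀ * mu j₀ c).trace with hδ
    have hψδ : ∀ c, ψ (δ c) = 1 := by
      intro c
      have h1 : ψ ((Y * lam i₀ c).trace) = ψ ((Y₀ * mu j₀ c).trace) := by
        have := DFunLike.congr_fun hmatch c
        simpa [hcharOf] using this
      have hne : ψ ((Y₀ * mu j₀ c).trace) ≠ 0 := by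
        intro h0
        have : ψ ((Y₀ * mu j₀ c).trace) * ψ (-(Y₀ * mu j₀ c).trace) = 1 := by
          rw [← AddChar.map_add_eq_mul, add_neg_cancel, AddChar.map_zero_eq_one]
        rw [h0, zero_mul] at this
        exact zero_ne_one this
      rw [hδ]
      show ψ ((Y * lam i₀ c).trace - (Y₀ * mu j₀ c).trace) = 1
      rw [sub_eq_add_neg, AddChar.map_add_eq_mul, AddChar.map_neg_eq_inv, h1,
        mul_inv_cancel₀ hne]
    by_contra hne0
    have hδc : δ c ≠ 0 := fun h => hne0 (sub_eq_zero.mp h)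
    have hall : ∀ x : F, ψ x = 1 := by
      intro x
      have hsc : δ (((x * (δ c)⁻¹) • (1 : Matrix (Fin m) (Fin m) F)) • c) = x := by
        have hl : lam i₀ (((x * (δ c)⁻¹) • (1 : Matrix (Fin m) (Fin m) F)) • c)
            = (x * (δ c)⁻¹) • lam i₀ c := by
          rw [map_smul, smul_def, Matrix.smul_mul, Matrix.one_mul]
        have hm' : mu j₀ (((x * (δ c)⁻¹) • (1 : Matrix (Fin m) (Fin m) F)) • c)
            = (x * (δ c)⁻¹) • mu j₀ c := by
          rw [map_smul, smul_def, Matrix.smul_mul, Matrix.one_mul]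
        rw [hδ]
        show (Y * lam i₀ _).trace - (Y₀ * mu j₀ _).trace = x
        rw [hl, hm', Matrix.mul_smul, Matrix.mul_smul, Matrix.trace_smul, Matrix.trace_smul]
        have : (x * (δ c)⁻¹) • ((Y * lam i₀ c).trace) - (x * (δ c)⁻¹) • ((Y₀ * mu j₀ c).trace)
            = (x * (δ c)⁻¹) * δ c := by rw [← smul_sub]; rfl
        rw [this]
        field_simp
      rw [← hsc]
      exact hψδ _
    exact hψ (hall 1)
  -- upgrade using the module action
  have hts : ∀ (s : Matrix (Fin m) (Fin m) F) (c : C),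
      ((Y * s) * lam i₀ c).trace = ((Y₀ * s) * mu j₀ c).trace := by
    intro s c
    have := ht (s • c)
    rw [map_smul, map_smul, smul_def, smul_def, ← Matrix.mul_assoc, ← Matrix.mul_assoc] at this
    exact this
  -- kernels
  have hker : ∀ c, lam i₀ c = 0 → mu j₀ c = 0 := by
    intro c hc
    apply trace_faithful
    intro Z
    obtain ⟨s, hs⟩ := hY₀surj Z
    rw [← hs, ← hts s c, hc, Matrix.mul_zero, Matrix.trace_zero]
  have hkereq : LinearMap.ker (lam i₀) = LinearMap.ker (mu j₀) := by
    have hle : LinearMap.ker (lam i₀) ≤ LinearMap.ker (mu j₀) := fun c hc =>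
      LinearMap.mem_ker.mpr (hker c (LinearMap.mem_ker.mp hc))
    rcases eq_or_lt_of_le hle with h | h
    · exact h
    · exact absurd h (hmin i₀)
  -- matrix identity : lam i₀ c * Y = mu j₀ c * Y₀
  have hmat : ∀ c, lam i₀ c * Y = mu j₀ c * Y₀ := by
    intro c
    have : lam i₀ c * Y - mu j₀ c * Y₀ = 0 := by
      apply trace_faithful
      intro s
      rw [Matrix.mul_sub, Matrix.trace_sub, sub_eq_zero]
      calc (s * (lam i₀ c * Y)).trace = ((Y * s) * lam i₀ c).trace := by
            rw [← Matrix.mul_assoc, Matrix.trace_mul_comm, ← Matrix.mul_assoc]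
        _ = ((Y₀ * s) * mu j₀ c).trace := hts s c
        _ = (s * (mu j₀ c * Y₀)).trace := by
            rw [Matrix.mul_assoc, Matrix.trace_mul_comm, Matrix.mul_assoc]
    have := sub_eq_zero.mp this
    exact this
  -- Q := the first k columns of Y
  set Q : Matrix (Fin k) (Fin k) F := Matrix.of (fun t j => Y t (Fin.castLE hk j)) with hQdef
  have hQ : ∀ c, mu j₀ c = lam i₀ c * Q := by
    intro c
    ext r j
    have h1 : (lam i₀ c * Y) r (Fin.castLE hk j) = (mu j₀ c * Y₀) r (Fin.castLE hk j) := by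
      rw [hmat c]
    have h2 : (mu j₀ c * Y₀) r (Fin.castLE hk j) = mu j₀ c r j := by
      rw [Matrix.mul_apply]
      rw [Finset.sum_eq_single j]
      · simp [hY₀, Fin.castLE]
      · intro t _ ht
        have hne : ¬ ((j : ℕ) = (t : ℕ)) := fun hc => ht (Fin.val_injective hc.symm)
        simp [hY₀, Fin.castLE, hne]
      · simp
    have h3 : (lam i₀ c * Y) r (Fin.castLE hk j) = (lam i₀ c * Q) r j := by
      rw [Matrix.mul_apply, Matrix.mul_apply]
      rfl
    rw [← h2, ← h1, h3]
  -- right multiplication by Q is injective on the range of `lam i₀`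
  set D := LinearMap.range (lam i₀) with hD
  have hDQ : ∀ X, X ∈ D → X * Q = 0 → X = 0 := by
    rintro X ⟨c, rfl⟩ h0
    have hmu : mu j₀ c = 0 := by rw [hQ c, h0]
    have : c ∈ LinearMap.ker (mu j₀) := LinearMap.mem_ker.mpr hmu
    rw [← hkereq] at this
    exact LinearMap.mem_ker.mp this
  -- rows
  set i0 : Fin m := ⟨0, hm⟩ with hi0
  set rowMat : (Fin k → F) → Matrix (Fin m) (Fin k) F :=
    fun w => Matrix.of fun i j => if i = i0 then w j else 0 with hrowMat
  have hrow1 : ∀ (X : Matrix (Fin m) (Fin k) F) (r : Fin m),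
      rowMat (X r) = (Matrix.of fun i j => if i = i0 ∧ j = r then (1:F) else 0 :
        Matrix (Fin m) (Fin m) F) * X := by
    intro X r
    ext i j
    rw [Matrix.mul_apply]
    by_cases hi : i = i0
    · rw [Finset.sum_eq_single r]
      · simp [hrowMat, hi]
      · intro t _ ht; simp [ht]
      · simp
    · simp [hrowMat, hi]
  have hrowD : ∀ c r, rowMat (lam i₀ c r) ∈ D := by
    intro c r
    rw [hrow1]
    have : (Matrix.of fun i j => if i = i0 ∧ j = r then (1:F) else 0 :
        Matrix (Fin m) (Fin m) F) * lam i₀ c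
        = (Matrix.of fun i j => if i = i0 ∧ j = r then (1:F) else 0 :
        Matrix (Fin m) (Fin m) F) • lam i₀ c := rfl
    rw [this]
    exact D.smul_mem _ (LinearMap.mem_range_self _ c)
  have hsmulF : ∀ (α : F) (X : Matrix (Fin m) (Fin k) F), X ∈ D → α • X ∈ D := by
    intro α X hX
    have : α • X = (α • (1 : Matrix (Fin m) (Fin m) F)) • X := by
      rw [smul_def, Matrix.smul_mul, Matrix.one_mul]
    rw [this]
    exact D.smul_mem _ hX
  set W : Submodule F (Fin k → F) :=
    { carrier := {w | rowMat w ∈ D}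
      add_mem' := by
        intro a b ha hb
        have h : rowMat (a + b) = rowMat a + rowMat b := by
          ext i j
          by_cases hi : i = i0 <;> simp [hrowMat, hi]
        show rowMat (a + b) ∈ D
        rw [h]
        exact D.add_mem ha hb
      zero_mem' := by
        have h : rowMat 0 = 0 := by
          ext i j
          by_cases hi : i = i0 <;> simp [hrowMat, hi]
        show rowMat 0 ∈ D
        rw [h]
        exact D.zero_mem
      smul_mem' := by
        intro α w hw
        have h : rowMat (α • w) = α • rowMat w := by
          ext i j
          by_cases hi : i = i0 <;> simp [hrowMat, hi]
        show rowMat (α • w) ∈ D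
        rw [h]
        exact hsmulF α _ hw } with hWdef
  have hmemW : ∀ w : Fin k → F, w ∈ W ↔ rowMat w ∈ D := fun w => Iff.rfl
  set θ : W →ₗ[F] (Fin k → F) :=
    { toFun := fun w => Matrix.vecMul (w : Fin k → F) Q
      map_add' := by
        intro a b
        show Matrix.vecMul ((a : Fin k → F) + (b : Fin k → F)) Q
          = Matrix.vecMul (a : Fin k → F) Q + Matrix.vecMul (b : Fin k → F) Q
        rw [Matrix.add_vecMul]
      map_smul' := by
        intro α a
        show Matrix.vecMul (α • (a : Fin k → F)) Q = α • Matrix.vecMul (a : Fin k → F) Q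
        rw [Matrix.smul_vecMul] } with hθdef
  have hrowmul : ∀ (w : Fin k → F), rowMat w * Q = rowMat (Matrix.vecMul w Q) := by
    intro w
    ext i j
    rw [mul_row_apply]
    have hrow : ∀ (v : Fin k → F) (i : Fin m), (rowMat v) i = if i = i0 then v else 0 := by
      intro v i
      funext t
      by_cases hi : i = i0 <;> simp [hrowMat, hi]
    rw [hrow]
    by_cases hi : i = i0
    · simp [hi, hrowMat]
    · simp [hi, hrowMat, Matrix.zero_vecMul]
  have hθinj : Function.Injective θ := by
    have h0 : ∀ w : W, θ w = 0 → w = 0 := by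
      intro w h0
      have hw : rowMat (w : Fin k → F) ∈ D := (hmemW _).mp w.2
      have : rowMat (w : Fin k → F) * Q = 0 := by
        rw [hrowmul]
        have hθw : Matrix.vecMul (w : Fin k → F) Q = 0 := h0
        rw [hθw]
        ext i j
        by_cases hi : i = i0 <;> simp [hrowMat, hi]
      have hzero := hDQ _ hw this
      apply Subtype.ext
      funext j
      have := congrFun (congrFun hzero i0) j
      simpa [hrowMat] using this
    intro a b hab
    have : a - b = 0 := h0 _ (by rw [map_sub, hab, sub_self])
    exact sub_eq_zero.mp this
  obtain ⟨T, hT⟩ := extend_linear W θ hθinj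
  set Q' : Matrix (Fin k) (Fin k) F :=
    Matrix.of (fun t j => T (fun s => if t = s then (1:F) else 0) j) with hQ'def
  set Q'' : Matrix (Fin k) (Fin k) F :=
    Matrix.of (fun t j => T.symm (fun s => if t = s then (1:F) else 0) j) with hQ''def
  have hQ'vec : ∀ w, Matrix.vecMul w Q' = T w := fun w => vecMul_linear T.toLinearMap w
  have hQ''vec : ∀ w, Matrix.vecMul w Q'' = T.symm w := fun w =>
    vecMul_linear T.symm.toLinearMap w
  have hrowQ' : ∀ t : Fin k, (Q' t) = T (fun s => if t = s then (1:F) else 0) := by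
    intro t; funext j; rfl
  have hrowQ'' : ∀ t : Fin k, (Q'' t) = T.symm (fun s => if t = s then (1:F) else 0) := by
    intro t; funext j; rfl
  have hQ'Q'' : Q' * Q'' = 1 := by
    ext t j
    rw [mul_row_apply, hrowQ', hQ''vec, LinearEquiv.symm_apply_apply, Matrix.one_apply]
  have hQ''Q' : Q'' * Q' = 1 := by
    ext t j
    rw [mul_row_apply, hrowQ'', hQ'vec, LinearEquiv.apply_symm_apply, Matrix.one_apply]
  let g : Matrix (Fin m) (Fin k) F ≃ₗ[Matrix (Fin m) (Fin m) F] Matrix (Fin m) (Fin k) F :=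
    { toFun := fun X => X * Q'
      map_add' := fun X X' => Matrix.add_mul X X' Q'
      map_smul' := fun r X => by
        show (r • X) * Q' = r • (X * Q')
        rw [smul_def, smul_def, Matrix.mul_assoc]
      invFun := fun X => X * Q''
      left_inv := fun X => by
        show X * Q' * Q'' = X
        rw [Matrix.mul_assoc, hQ'Q'', Matrix.mul_one]
      right_inv := fun X => by
        show X * Q'' * Q' = X
        rw [Matrix.mul_assoc, hQ''Q', Matrix.mul_one] }
  refine ⟨i₀, g, ?_⟩
  intro c
  show mu j₀ c = lam i₀ c * Q'
  rw [hQ c]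
  ext r j
  rw [mul_row_apply, mul_row_apply]
  have hrW : (lam i₀ c r) ∈ W := (hmemW _).mpr (hrowD c r)
  rw [hQ'vec (lam i₀ c r), hT _ hrW]
  rfl



lemma key (hk : k ≤ m) (hk0 : 0 < k)
    {C : Type*} [AddCommGroup C] [Module (Matrix (Fin m) (Fin m) F) C] [Fintype C] :
    ∀ (N : ℕ) (lam mu : Fin N → (C →ₗ[Matrix (Fin m) (Fin m) F] Matrix (Fin m) (Fin k) F)),
      (∀ c, ∑ i, (if lam i c = 0 then 0 else 1 : ℕ)
        = ∑ i, (if mu i c = 0 then 0 else 1 : ℕ)) →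
      ∃ π : Equiv.Perm (Fin N),
        ∀ j, ∃ g : Matrix (Fin m) (Fin k) F ≃ₗ[Matrix (Fin m) (Fin m) F] Matrix (Fin m) (Fin k) F,
          ∀ c, mu j c = g (lam (π j) c) := by
  intro N
  induction N with
  | zero =>
    intro lam mu _
    exact ⟨Equiv.refl _, fun j => j.elim0⟩
  | succ N IH =>
    intro lam mu h
    classical
    obtain ⟨i₀, j₀, g, hg⟩ :
        ∃ (i₀ j₀ : Fin (N+1))
          (g : Matrix (Fin m) (Fin k) F ≃ₗ[Matrix (Fin m) (Fin m) F] Matrix (Fin m) (Fin k) F),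
          ∀ c, mu j₀ c = g (lam i₀ c) := by
      set S : Finset (Submodule (Matrix (Fin m) (Fin m) F) C) :=
        (Finset.univ.image fun i => LinearMap.ker (lam i)) ∪
        (Finset.univ.image fun i => LinearMap.ker (mu i)) with hS
      have hne : S.Nonempty := ⟨LinearMap.ker (lam 0), by
        rw [hS, Finset.mem_union]
        exact Or.inl (Finset.mem_image_of_mem _ (Finset.mem_univ 0))⟩
      obtain ⟨K, hKmem, hKmin⟩ := S.exists_minimal hne
      rw [hS, Finset.mem_union] at hKmem
      rcases hKmem with hK | hK
      · obtain ⟨i₀, -, hKi⟩ := Finset.mem_image.mp hK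
        have hmin' : ∀ i, ¬ (LinearMap.ker (mu i) < LinearMap.ker (lam i₀)) := by
          intro i hlt
          rw [hKi] at hlt
          exact lt_irrefl _ (lt_of_lt_of_le hlt (hKmin (by
            show _ ∈ S; rw [hS, Finset.mem_union]
            exact Or.inr (Finset.mem_image_of_mem _ (Finset.mem_univ i))) hlt.le))
        obtain ⟨j₀, g', hg'⟩ := half hk hk0 mu lam (fun c => (h c).symm) i₀ hmin'
        refine ⟨i₀, j₀, g'.symm, fun c => ?_⟩
        rw [hg' c, LinearEquiv.symm_apply_apply]
      · obtain ⟨j₀, -, hKj⟩ := Finset.mem_image.mp hK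
        have hmin' : ∀ i, ¬ (LinearMap.ker (lam i) < LinearMap.ker (mu j₀)) := by
          intro i hlt
          rw [hKj] at hlt
          exact lt_irrefl _ (lt_of_lt_of_le hlt (hKmin (by
            show _ ∈ S; rw [hS, Finset.mem_union]
            exact Or.inl (Finset.mem_image_of_mem _ (Finset.mem_univ i))) hlt.le))
        obtain ⟨i₀, g, hg⟩ := half hk hk0 lam mu h j₀ hmin'
        exact ⟨i₀, j₀, g, hg⟩
    have hiff : ∀ c, (lam i₀ c = 0 ↔ mu j₀ c = 0) := by
      intro c
      constructor
      · intro h0; rw [hg c, h0, map_zero]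
      · intro h0
        have h1 := hg c
        rw [h0] at h1
        exact (LinearEquiv.map_eq_zero_iff g).mp h1.symm
    set lam' : Fin N → (C →ₗ[Matrix (Fin m) (Fin m) F] Matrix (Fin m) (Fin k) F) :=
      fun t => lam (i₀.succAbove t) with hlam'
    set mu' : Fin N → (C →ₗ[Matrix (Fin m) (Fin m) F] Matrix (Fin m) (Fin k) F) :=
      fun t => mu (j₀.succAbove t) with hmu'
    have h' : ∀ c, ∑ t, (if lam' t c = 0 then 0 else 1 : ℕ)
        = ∑ t, (if mu' t c = 0 then 0 else 1 : ℕ) := by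
      intro c
      have h1 := h c
      rw [Fin.sum_univ_succAbove (fun i => (if lam i c = 0 then 0 else 1 : ℕ)) i₀,
        Fin.sum_univ_succAbove (fun i => (if mu i c = 0 then 0 else 1 : ℕ)) j₀] at h1
      have h2 : (if lam i₀ c = 0 then 0 else 1 : ℕ) = (if mu j₀ c = 0 then 0 else 1) := by
        by_cases h0 : lam i₀ c = 0
        · rw [if_pos h0, if_pos ((hiff c).mp h0)]
        · rw [if_neg h0, if_neg (fun hmu0 => h0 ((hiff c).mpr hmu0))]
      rw [h2] at h1
      exact Nat.add_left_cancel h1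
    obtain ⟨π', hπ'⟩ := IH lam' mu' h'
    refine ⟨(finSuccEquiv' j₀).trans ((Equiv.optionCongr π').trans (finSuccEquiv' i₀).symm), ?_⟩
    intro j
    by_cases hj : j = j₀
    · subst hj
      have hπ : ((finSuccEquiv' j).trans
          ((Equiv.optionCongr π').trans (finSuccEquiv' i₀).symm)) j = i₀ := by
        rw [Equiv.trans_apply, Equiv.trans_apply, finSuccEquiv'_at]
        simp [finSuccEquiv'_symm_none]
      rw [hπ]
      exact ⟨g, hg⟩
    · obtain ⟨t, rfl⟩ := Fin.exists_succAbove_eq hj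
      have hπ : ((finSuccEquiv' j₀).trans
          ((Equiv.optionCongr π').trans (finSuccEquiv' i₀).symm)) (j₀.succAbove t)
          = i₀.succAbove (π' t) := by
        rw [Equiv.trans_apply, Equiv.trans_apply, finSuccEquiv'_succAbove]
        simp [finSuccEquiv'_symm_some]
      rw [hπ]
      exact hπ' t

end MatExt

/-- Extension theorem for matrix module alphabets: for `R = M_m(F_q)` and
`A = M_{m×k}(F_q)` with `k ≤ m`, the alphabet `A` has the extension property: every
Hamming isometry of an `R`-submodule code `C ⊆ A^n` extends to a monomial map. -/
theorem matrix_module_extension_property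
    [Fintype F] [DecidableEq F] (hk : k ≤ m) {n : ℕ}
    (C : Submodule (Matrix (Fin m) (Fin m) F) (Fin n → Matrix (Fin m) (Fin k) F))
    (f : C →ₗ[Matrix (Fin m) (Fin m) F] (Fin n → Matrix (Fin m) (Fin k) F))
    (hf : ∀ c : C, hammingNorm (f c) = hammingNorm (c : Fin n → Matrix (Fin m) (Fin k) F)) :
    ∃ (π : Equiv.Perm (Fin n))
      (g : Fin n → (Matrix (Fin m) (Fin k) F ≃ₗ[Matrix (Fin m) (Fin m) F]
        Matrix (Fin m) (Fin k) F)),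
      ∀ c : C, f c = fun i => g i ((c : Fin n → Matrix (Fin m) (Fin k) F) (π i)) := by
  classical
  by_cases hk0 : k = 0
  · subst hk0
    haveI : Subsingleton (Matrix (Fin m) (Fin 0) F) :=
      ⟨fun a b => by ext i j; exact j.elim0⟩
    exact ⟨Equiv.refl _, fun _ => LinearEquiv.refl _ _,
      fun c => funext fun i => Subsingleton.elim _ _⟩
  · have hk0' : 0 < k := Nat.pos_of_ne_zero hk0
    haveI : Fintype C := Fintype.ofFinite C
    set lam : Fin n → (C →ₗ[Matrix (Fin m) (Fin m) F] Matrix (Fin m) (Fin k) F) :=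
      fun i => (LinearMap.proj i).comp C.subtype with hlam
    set mu : Fin n → (C →ₗ[Matrix (Fin m) (Fin m) F] Matrix (Fin m) (Fin k) F) :=
      fun i => (LinearMap.proj i).comp f with hmu
    have hcount : ∀ (x : Fin n → Matrix (Fin m) (Fin k) F),
        hammingNorm x = ∑ i, (if x i = 0 then 0 else 1 : ℕ) := by
      intro x
      rw [hammingNorm, Finset.card_filter]
      exact Finset.sum_congr rfl fun i _ => by by_cases h0 : x i = 0 <;> simp [h0]
    have hw : ∀ c : C, ∑ i, (if lam i c = 0 then 0 else 1 : ℕ)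
        = ∑ i, (if mu i c = 0 then 0 else 1 : ℕ) := by
      intro c
      have h1 := hf c
      rw [hcount, hcount] at h1
      exact h1.symm
    obtain ⟨π, hπ⟩ := MatExt.key hk hk0' n lam mu hw
    choose g hg using hπ
    exact ⟨π, g, fun c => funext fun i => hg i c⟩

end
end
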